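/- Every matrix A ∈ Skew(2n,F) can be written in the form A = g · diag(ϖ^{-k₁}J, ϖ^{-k₂}J, …, ϖ^{-k_n}J) · g^t for some g ∈ GL(2n,O_F) and some k₁ ≥ k₂ ≥ … ≥ k_n with each k_i ∈ ℤ∪{-∞}. -/

import Mathlib

/-!
Common setup: `F` is a non-discrete non-Archimedean locally compact field, encoded as a
nontrivially normed field which is ultrametric and locally compact.  Its ring of integers is
`O_F = {x : F | ‖x‖ ≤ 1}`.  The condition `char F ≠ 2` is encoded as `(2 : F) ≠ 0`.
-/

open MeasureTheory Metric Matrix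
open scoped symmDiff ENNReal

noncomputable section
set_option linter.unusedSectionVars false

namespace SkewPaper

variable (F : Type) [NontriviallyNormedField F] [IsUltrametricDist F]
  [LocallyCompactSpace F] [SecondCountableTopology F] [MeasurableSpace F] [BorelSpace F]

/-- The infinite identity matrix. -/
def idM : ℕ → ℕ → F := fun i j => if i = j then 1 else 0

/-- Product of infinite matrices, defined via `tsum` (a finite sum whenever the supports
involved are finite, e.g. for matrices that are eventually the identity). -/
def mulInf (g h : ℕ → ℕ → F) : ℕ → ℕ → F := fun i j => ∑' k, g i k * h k j

/-- All entries of `g` lie in the ring of integers `O_F = {x | ‖x‖ ≤ 1}`. -/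
def IsIntegralM (g : ℕ → ℕ → F) : Prop := ∀ i j, ‖g i j‖ ≤ 1

/-- `g` coincides with the identity matrix outside a finite upper-left corner. -/
def EventuallyId (g : ℕ → ℕ → F) : Prop :=
  ∃ N, ∀ i j, N ≤ i ∨ N ≤ j → g i j = idM F i j

/-- The group `GL(∞, O_F)`: infinite matrices over `O_F`, eventually equal to the identity,
invertible with an inverse of the same kind. -/
def GLinf : Set (ℕ → ℕ → F) :=
  {g | IsIntegralM F g ∧ EventuallyId F g ∧
    ∃ h, IsIntegralM F h ∧ EventuallyId F h ∧ mulInf F g h = idM F ∧ mulInf F h g = idM F}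

/-- `A` is skew-symmetric: `A j i = - A i j` for all `i, j`. -/
def IsSkew (A : ℕ → ℕ → F) : Prop := ∀ i j, A j i = - A i j

/-- The space `Skew(ℕ, F)` of infinite skew-symmetric matrices over `F`. -/
def SkewSet : Set (ℕ → ℕ → F) := {A | IsSkew F A}

/-- `Skew(ℕ, F)` as a topological/measurable space. -/
abbrev SkewM := ↥(SkewSet F)

/-- `A` is symmetric. -/
def IsSym (A : ℕ → ℕ → F) : Prop := ∀ i j, A j i = A i j

/-- The space `Sym(ℕ, F)` of infinite symmetric matrices over `F`. -/
def SymSet : Set (ℕ → ℕ → F) := {A | IsSym F A}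

/-- `Sym(ℕ, F)` as a topological/measurable space. -/
abbrev SymM := ↥(SymSet F)

/-- The action `A ↦ g A gᵗ` of `GL(∞, O_F)` on `Skew(ℕ, F)`:
`(g A gᵗ)_{ij} = ∑_{k,l} g_{ik} g_{jl} A_{kl}`. -/
def skewAct (g : ℕ → ℕ → F) (A : SkewM F) : SkewM F :=
  ⟨fun i j => ∑' p : ℕ × ℕ, g i p.1 * g j p.2 * A.1 p.1 p.2, by
    intro i j
    have h1 : (∑' p : ℕ × ℕ, g j p.1 * g i p.2 * A.1 p.1 p.2)
        = ∑' p : ℕ × ℕ, g j p.2 * g i p.1 * A.1 p.2 p.1 :=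
      ((Equiv.prodComm ℕ ℕ).tsum_eq (fun p : ℕ × ℕ => g j p.1 * g i p.2 * A.1 p.1 p.2)).symm
    have h2 : (∑' p : ℕ × ℕ, g j p.2 * g i p.1 * A.1 p.2 p.1)
        = ∑' p : ℕ × ℕ, - (g i p.1 * g j p.2 * A.1 p.1 p.2) := by
      refine tsum_congr fun p => ?_
      rw [A.2 p.1 p.2]; ring
    simp only [h1, h2, tsum_neg]⟩

/-- The action `A ↦ g A gᵗ` of `GL(∞, O_F)` on `Sym(ℕ, F)`. -/
def symAct (g : ℕ → ℕ → F) (A : SymM F) : SymM F :=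
  ⟨fun i j => ∑' p : ℕ × ℕ, g i p.1 * g j p.2 * A.1 p.1 p.2, by
    intro i j
    have h1 : (∑' p : ℕ × ℕ, g j p.1 * g i p.2 * A.1 p.1 p.2)
        = ∑' p : ℕ × ℕ, g j p.2 * g i p.1 * A.1 p.2 p.1 :=
      ((Equiv.prodComm ℕ ℕ).tsum_eq (fun p : ℕ × ℕ => g j p.1 * g i p.2 * A.1 p.1 p.2)).symm
    have h2 : (∑' p : ℕ × ℕ, g j p.2 * g i p.1 * A.1 p.2 p.1)
        = ∑' p : ℕ × ℕ, g i p.1 * g j p.2 * A.1 p.1 p.2 := by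
      refine tsum_congr fun p => ?_
      rw [A.2 p.1 p.2]; ring
    simp only [h1, h2]⟩

/-- A Borel probability measure on `Skew(ℕ, F)` is `GL(∞, O_F)`-invariant. -/
def IsInvSkew (μ : Measure (SkewM F)) : Prop :=
  ∀ g ∈ GLinf F, μ.map (skewAct F g) = μ

/-- A Borel measure on `Skew(ℕ, F)` is ergodic for the `GL(∞, O_F)`-action: any Borel set
`E` with `μ(E ∆ gE) = 0` for all `g` has measure `0` or `1`. -/
def IsErgSkew (μ : Measure (SkewM F)) : Prop :=
  ∀ E : Set (SkewM F), MeasurableSet E →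
    (∀ g ∈ GLinf F, μ (E ∆ (skewAct F g ⁻¹' E)) = 0) → μ E = 0 ∨ μ E = 1

/-- A Borel probability measure on `Mat(ℕ, F)` is `GL(∞, O_F) × GL(∞, O_F)`-invariant
(for the action `(g₁, g₂) · X = g₁ X g₂⁻¹`; equivalently, `X ↦ g₁ X g₂` preserves `σ` for
all `g₁, g₂ ∈ GL(∞, O_F)`). -/
def IsInvMat (σ : Measure (ℕ → ℕ → F)) : Prop :=
  ∀ g₁ ∈ GLinf F, ∀ g₂ ∈ GLinf F,
    σ.map (fun X => mulInf F (mulInf F g₁ X) g₂) = σ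

/-- A Borel probability measure on `Sym(ℕ, F)` is `GL(∞, O_F)`-invariant. -/
def IsInvSym (μ : Measure (SymM F)) : Prop :=
  ∀ g ∈ GLinf F, μ.map (symAct F g) = μ

/-- The map `τ(X) = X - Xᵗ` from `Mat(ℕ, F)` to `Skew(ℕ, F)`. -/
def tauMap (X : ℕ → ℕ → F) : SkewM F :=
  ⟨fun i j => X i j - X j i, by intro i j; ring⟩

/-- The map `X ↦ X + Xᵗ` from `Mat(ℕ, F)` to `Sym(ℕ, F)`. -/
def sigmaMap (X : ℕ → ℕ → F) : SymM F :=
  ⟨fun i j => X i j + X j i, by intro i j; ring⟩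

/-! ### The parameter space `Δ` and the measures `μ_𝕜` -/

/-- Topologize `ℤ ∪ {-∞}` by its order topology: integer points are isolated and the
intervals `[-∞, a)` form a neighbourhood basis of `-∞`. -/
instance : TopologicalSpace (WithBot ℤ) := Preorder.topology _
instance : OrderTopology (WithBot ℤ) := ⟨rfl⟩

/-- The space `Δ` of nonincreasing sequences `(k_j)` with `k_j ∈ ℤ ∪ {-∞}`, topologized as
a subspace of the product `(ℤ ∪ {-∞})^ℕ`. -/
abbrev DeltaSet := {k : ℕ → WithBot ℤ // Antitone k}

/-- `ppow ϖ m = ϖ^(-m)`, with the convention `ϖ^(-(-∞)) = ϖ^∞ = 0`. -/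
def ppow (ϖ : F) : WithBot ℤ → F := fun m => WithBot.recBotCoe 0 (fun z : ℤ => ϖ ^ (-z)) m

/-- The limit `k = lim_n k_n` of a nonincreasing sequence in `ℤ ∪ {-∞}` (its infimum). -/
def klim (k : ℕ → WithBot ℤ) : WithBot ℤ := ⨅ n, k n

/-- The sample space carrying the independent uniform random variables
`X_i^{(n)} = ω (0, n, i)`, `Y_i^{(n)} = ω (1, n, i)` and `Z_{ij} = ω (2, i, j)`. -/
abbrev SampleSpace := (Fin 3 × ℕ × ℕ) → F

/-- The random infinite skew-symmetric matrix
`A_𝕜 = ∑_{n : k_n > k} ϖ^{-k_n} [X_i^{(n)} Y_j^{(n)} - X_j^{(n)} Y_i^{(n)}]_{i,j} + ϖ^{-k} Z`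
of Definition 1.1. -/
def Amat (ϖ : F) (k : ℕ → WithBot ℤ) (ω : SampleSpace F) : ℕ → ℕ → F := fun i j =>
  (∑' n : ℕ, if klim k < k n then
      ppow F ϖ (k n) * (ω (0, n, i) * ω (1, n, j) - ω (0, n, j) * ω (1, n, i)) else 0)
  + ppow F ϖ (klim k) *
      (if i < j then ω (2, i, j) else if j < i then - ω (2, j, i) else 0)

lemma Amat_isSkew (ϖ : F) (k : ℕ → WithBot ℤ) (ω : SampleSpace F) :
    Amat F ϖ k ω ∈ SkewSet F := by
  intro i j
  unfold Amat
  have h1 : (∑' n : ℕ, if klim k < k n then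
      ppow F ϖ (k n) * (ω (0, n, j) * ω (1, n, i) - ω (0, n, i) * ω (1, n, j)) else 0)
      = ∑' n : ℕ, - (if klim k < k n then
      ppow F ϖ (k n) * (ω (0, n, i) * ω (1, n, j) - ω (0, n, j) * ω (1, n, i)) else 0) := by
    refine tsum_congr fun n => ?_
    split <;> ring
  have h2 : (if j < i then ω (2, j, i) else if i < j then - ω (2, i, j) else 0)
      = - (if i < j then ω (2, i, j) else if j < i then - ω (2, j, i) else 0) := by
    rcases lt_trichotomy i j with h | h | h
    · simp [h, not_lt_of_gt h]
    · simp [h, lt_irrefl]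
    · simp [h, not_lt_of_gt h]
  rw [h1, h2, tsum_neg]
  ring

/-- The random matrix `A_𝕜`, as a `Skew(ℕ, F)`-valued random variable. -/
def AmatS (ϖ : F) (𝕜 : DeltaSet) (ω : SampleSpace F) : SkewM F :=
  ⟨Amat F ϖ 𝕜.1 ω, Amat_isSkew F ϖ 𝕜.1 ω⟩

/-- The measure `μ_𝕜`: the law of the random skew-symmetric matrix `A_𝕜`. -/
def muK (ϖ : F) (P : Measure (SampleSpace F)) (𝕜 : DeltaSet) : Measure (SkewM F) :=
  P.map (AmatS F ϖ 𝕜)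

/-- `ν` is the uniform (normalized Haar) probability measure on the ring of integers
`O_F`: a probability measure carried by `O_F` and invariant under all translations by
elements of `O_F`. -/
def IsUnifO (ν : Measure F) : Prop :=
  IsProbabilityMeasure ν ∧ ν {x : F | ¬ ‖x‖ ≤ 1} = 0 ∧
    ∀ a : F, ‖a‖ ≤ 1 → ν.map (fun x => a + x) = ν

/-- `P` is the joint law of countably many independent random variables, each sampled
uniformly from `O_F`. -/
def IsIIDUnifO (P : Measure (SampleSpace F)) : Prop :=
  IsProbabilityMeasure P ∧
  ProbabilityTheory.iIndepFun
    (fun idx => fun ω : SampleSpace F => ω idx) P ∧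
  ∀ idx : Fin 3 × ℕ × ℕ, IsUnifO F (P.map (fun ω : SampleSpace F => ω idx))

/-- `ϖ` is a uniformizer of `F`: a generator of the maximal ideal `m = {x | ‖x‖ < 1}`
of `O_F`. -/
def IsUniformizer (ϖ : F) : Prop :=
  ϖ ≠ 0 ∧ ‖ϖ‖ < 1 ∧ ∀ x : F, ‖x‖ < 1 → ∃ y : F, ‖y‖ ≤ 1 ∧ x = ϖ * y

/-- The residue field `O_F/m` has `q` elements; for the normalized absolute value this is
recorded by `‖ϖ‖ = q⁻¹`, together with the fact that the value group is `q^ℤ`. -/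
def IsResidueCard (ϖ : F) (q : ℕ) : Prop :=
  1 < q ∧ ‖ϖ‖ = (q : ℝ)⁻¹ ∧ ∀ x : F, x ≠ 0 → ∃ m : ℤ, ‖x‖ = (q : ℝ) ^ m

/-! ### Characteristic functions -/

/-- `tr(X · S)` for infinite matrices, via `tsum` (a finite sum when `X` has finitely many
nonzero entries). -/
def trPair (X S : ℕ → ℕ → F) : F := ∑' p : ℕ × ℕ, X p.1 p.2 * S p.2 p.1

/-- The characteristic function `μ̂(X) = ∫ χ(tr(X S)) dμ(S)` of a measure on `Skew(ℕ, F)`. -/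
def charFunSkew (χ : AddChar F ℂ) (μ : Measure (SkewM F)) (X : ℕ → ℕ → F) : ℂ :=
  ∫ S, χ (trPair F X S.1) ∂μ

/-- The characteristic function `σ̂(X) = ∫ χ(tr(X M)) dσ(M)` of a measure on `Mat(ℕ, F)`. -/
def charFunMat (χ : AddChar F ℂ) (σ : Measure (ℕ → ℕ → F)) (X : ℕ → ℕ → F) : ℂ :=
  ∫ M, χ (trPair F X M) ∂σ

/-- `χ` is a (continuous) additive character of `F` with `χ ≡ 1` on `O_F` and `χ`
nonconstant on `ϖ⁻¹ O_F`. -/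
def IsGoodChar (ϖ : F) (χ : AddChar F ℂ) : Prop :=
  Continuous χ ∧ (∀ x : F, ‖x‖ ≤ 1 → χ x = 1) ∧ ∃ x : F, ‖ϖ * x‖ ≤ 1 ∧ χ x ≠ 1

/-! ### Finite matrices, Haar measures, orbital measures -/

instance (m n : ℕ) : MeasurableSpace (Matrix (Fin m) (Fin n) F) :=
  inferInstanceAs (MeasurableSpace (Fin m → Fin n → F))

instance (m n : ℕ) : TopologicalSpace (Matrix (Fin m) (Fin n) F) :=
  inferInstanceAs (TopologicalSpace (Fin m → Fin n → F))

/-- The compact group `GL(n, O_F)` of `n × n` matrices over `O_F` whose inverse also has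
entries in `O_F`. -/
def GLO (n : ℕ) : Set (Matrix (Fin n) (Fin n) F) :=
  {g | (∀ i j, ‖g i j‖ ≤ 1) ∧ ∃ h : Matrix (Fin n) (Fin n) F,
    (∀ i j, ‖h i j‖ ≤ 1) ∧ g * h = 1 ∧ h * g = 1}

/-- `η` is the normalized Haar measure of the compact group `GL(n, O_F)`, viewed as a
measure on `n × n` matrices over `F`: a probability measure carried by `GL(n, O_F)`,
invariant under left and right translations by elements of `GL(n, O_F)`. -/
def IsHaarGL (n : ℕ) (η : Measure (Matrix (Fin n) (Fin n) F)) : Prop :=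
  IsProbabilityMeasure η ∧ η (GLO F n)ᶜ = 0 ∧
    ∀ g ∈ GLO F n, η.map (fun x => g * x) = η ∧ η.map (fun x => x * g) = η

/-- `m` is the normalized Haar measure of the compact additive group `Mat(n, O_F)`, viewed
as a measure on `n × n` matrices over `F`. -/
def IsHaarMat (n : ℕ) (m : Measure (Matrix (Fin n) (Fin n) F)) : Prop :=
  IsProbabilityMeasure m ∧ m {Y | ¬ ∀ i j, ‖Y i j‖ ≤ 1} = 0 ∧
    ∀ B : Matrix (Fin n) (Fin n) F, (∀ i j, ‖B i j‖ ≤ 1) → m.map (fun Y => B + Y) = m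

/-- The matrix `J = [[0, 1], [-1, 0]]`. -/
def Jmat : Matrix (Fin 2) (Fin 2) F := !![0, 1; -1, 0]

/-- The function `Θ(x) = ∫_{Mat(2, O_F)} χ(x · tr(Y J Yᵗ J)) dY`, where `dY` is the
normalized Haar measure `m2` of `Mat(2, O_F)`. -/
def Theta (χ : AddChar F ℂ) (m2 : Measure (Matrix (Fin 2) (Fin 2) F)) (x : F) : ℂ :=
  ∫ Y, χ (x * Matrix.trace (Y * Jmat F * Yᵀ * Jmat F)) ∂m2

/-- The block-diagonal skew-symmetric matrix `diag(x₁ J, …, xₙ J)` of size `2n × 2n`. -/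
def bdiagJ (n : ℕ) (xs : Fin n → F) : Matrix (Fin (2 * n)) (Fin (2 * n)) F :=
  Matrix.of fun i j : Fin (2 * n) =>
    if (j : ℕ) = (i : ℕ) + 1 ∧ (i : ℕ) % 2 = 0 then xs ⟨(i : ℕ) / 2, by have := i.isLt; omega⟩
    else if (i : ℕ) = (j : ℕ) + 1 ∧ (j : ℕ) % 2 = 0 then
      - xs ⟨(j : ℕ) / 2, by have := j.isLt; omega⟩
    else 0

/-- The infinite matrix `diag(x₀ J, …, x_{r-1} J, 0, 0, …)`. -/
def bdiagJInf (r : ℕ) (xs : ℕ → F) : ℕ → ℕ → F := fun i j =>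
  if i < 2 * r ∧ j < 2 * r then
    (if j = i + 1 ∧ i % 2 = 0 then xs (i / 2)
     else if i = j + 1 ∧ j % 2 = 0 then - xs (j / 2) else 0)
  else 0

/-- Embedding of an `n × n` matrix in the upper-left corner of an infinite matrix,
extended by the identity. -/
def embedG (n : ℕ) (g : Matrix (Fin n) (Fin n) F) : ℕ → ℕ → F := fun i j =>
  if h : i < n ∧ j < n then g ⟨i, h.1⟩ ⟨j, h.2⟩ else idM F i j

/-- Embedding of an `n × n` matrix in the upper-left corner of an infinite matrix,
extended by zero. -/
def embedZ (n : ℕ) (A : Matrix (Fin n) (Fin n) F) : ℕ → ℕ → F := fun i j =>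
  if h : i < n ∧ j < n then A ⟨i, h.1⟩ ⟨j, h.2⟩ else 0

lemma embedZ_isSkew (n : ℕ) (A : Matrix (Fin n) (Fin n) F) (hA : Aᵀ = -A) :
    embedZ F n A ∈ SkewSet F := by
  intro i j
  unfold embedZ
  by_cases h : i < n ∧ j < n
  · have h' : j < n ∧ i < n := ⟨h.2, h.1⟩
    rw [dif_pos h, dif_pos h']
    have := congrFun (congrFun hA ⟨i, h.1⟩) ⟨j, h.2⟩
    simpa [Matrix.transpose_apply] using this
  · have h' : ¬ (j < n ∧ i < n) := fun hc => h ⟨hc.2, hc.1⟩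
    rw [dif_neg h, dif_neg h', neg_zero]

/-- The orbital measure `m_n(A)`: the image of the normalized Haar measure `η` of
`GL(2n, O_F)` under `g ↦ g A gᵗ ∈ Skew(ℕ, F)` (with `A` in the upper-left corner). -/
def orbital (n : ℕ) (η : Measure (Matrix (Fin (2 * n)) (Fin (2 * n)) F))
    (A : Matrix (Fin (2 * n)) (Fin (2 * n)) F) (hA : Aᵀ = -A) : Measure (SkewM F) :=
  η.map fun g => skewAct F (embedG F (2 * n) g) ⟨embedZ F (2 * n) A, embedZ_isSkew F _ A hA⟩

/-- The set of ergodic `GL(∞, O_F)`-invariant Borel probability measures on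
`Skew(ℕ, F)`, inside the space of Borel probability measures with its weak topology. -/
def PergSkew : Set (ProbabilityMeasure (SkewM F)) :=
  {μ | IsInvSkew F (μ : Measure (SkewM F)) ∧ IsErgSkew F (μ : Measure (SkewM F))}


/-- The set of `GL(∞,O_F) × GL(∞,O_F)`-invariant Borel probability measures on `Mat(ℕ, F)`,
with the weak topology. -/
def PinvMat : Set (ProbabilityMeasure (ℕ → ℕ → F)) :=
  {σ | IsInvMat F (σ : Measure (ℕ → ℕ → F))}

/-- The set of `GL(∞,O_F)`-invariant Borel probability measures on `Skew(ℕ, F)`,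
with the weak topology. -/
def PinvSkew : Set (ProbabilityMeasure (SkewM F)) :=
  {μ | IsInvSkew F (μ : Measure (SkewM F))}

/-- The map `A ↦ (A(2i-1, 2i))_{i≥1}` (in 0-indexed form, `A ↦ (A(2i, 2i+1))_{i≥0}`). -/
def cornerSeq (A : SkewM F) : ℕ → F := fun i => A.1 (2 * i) (2 * i + 1)

/-- The group `S(∞)` of finitely supported permutations of `ℕ`. -/
def SPermInf : Set (Equiv.Perm ℕ) := {π | ∃ N, ∀ n, N ≤ n → π n = n}

/-- A Borel measure on `F^ℕ` is invariant under `S(∞)` acting by permutations of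
coordinates. -/
def IsInvSPerm (ν : Measure (ℕ → F)) : Prop :=
  ∀ π ∈ SPermInf, ν.map (fun x => x ∘ π) = ν

/-- The summand `(k + ℓ - ℓ₀) 𝟙_{k + ℓ ≥ ℓ₀}` (as an element of `[0, ∞]`; it vanishes
when `k = -∞`). -/
def deltaTerm (ℓ₀ : ℕ) (ℓ : ℤ) (k : WithBot ℤ) : ℝ≥0∞ :=
  if (0 : WithBot ℤ) ≤ k + (((ℓ - (ℓ₀ : ℤ)) : ℤ) : WithBot ℤ) then
    (((k + (((ℓ - (ℓ₀ : ℤ)) : ℤ) : WithBot ℤ)).unbotD 0).toNat : ℝ≥0∞)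
  else 0

/-- The infinite matrix `diag(x, y, 0, 0, …)`. -/
def diag2 (x y : F) : ℕ → ℕ → F := fun i j =>
  if i = 0 ∧ j = 0 then x else if i = 1 ∧ j = 1 then y else 0

/-- The infinite matrix whose top-left `2 × 2` block is `x · J = [[0, x], [-x, 0]]` and
whose other entries vanish. -/
def JInf (x : F) : ℕ → ℕ → F := fun i j =>
  if i = 0 ∧ j = 1 then x else if i = 1 ∧ j = 0 then -x else 0

/-- The infinite matrix with `(1,1)`-entry `x` and all other entries `0`. -/
def e11 (x : F) : ℕ → ℕ → F := fun i j => if i = 0 ∧ j = 0 then x else 0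

section Helpers

variable {m' : Type} [Fintype m'] [DecidableEq m']

def GLlike {m' : Type} [Fintype m'] [DecidableEq m'] (g : Matrix m' m' F) : Prop :=
  (∀ i j, ‖g i j‖ ≤ 1) ∧ ∃ h : Matrix m' m' F,
    (∀ i j, ‖h i j‖ ≤ 1) ∧ g * h = 1 ∧ h * g = 1

variable {m' : Type} [Fintype m'] [DecidableEq m']

lemma entry_mul_le {l p : Type} (M : Matrix l m' F) (N : Matrix m' p F) {c d : ℝ}
    (hc : 0 ≤ c) (hd : 0 ≤ d) (hM : ∀ i j, ‖M i j‖ ≤ c) (hN : ∀ i j, ‖N i j‖ ≤ d)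
    (i : l) (j : p) : ‖(M * N) i j‖ ≤ c * d := by
  rw [Matrix.mul_apply]
  refine IsUltrametricDist.norm_sum_le_of_forall_le_of_nonneg (mul_nonneg hc hd) ?_
  intro k _
  rw [norm_mul]
  exact mul_le_mul (hM i k) (hN k j) (norm_nonneg _) hc

lemma GLlike_one : GLlike F (1 : Matrix m' m' F) :=
  ⟨fun i j => by rw [Matrix.one_apply]; split <;> simp,
   1, fun i j => by rw [Matrix.one_apply]; split <;> simp, by simp, by simp⟩

lemma GLlike.mul {g h : Matrix m' m' F} (hg : GLlike F g) (hh : GLlike F h) :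
    GLlike F (g * h) := by
  obtain ⟨hg1, g', hg'1, hgg', hg'g⟩ := hg
  obtain ⟨hh1, h', hh'1, hhh', hh'h⟩ := hh
  refine ⟨fun i j => by simpa using entry_mul_le F g h zero_le_one zero_le_one hg1 hh1 i j,
    h' * g', fun i j => by simpa using entry_mul_le F h' g' zero_le_one zero_le_one hh'1 hg'1 i j,
    ?_, ?_⟩
  · calc g * h * (h' * g') = g * (h * h') * g' := by simp only [Matrix.mul_assoc]
    _ = 1 := by rw [hhh', Matrix.mul_one, hgg']
  · calc h' * g' * (g * h) = h' * (g' * g) * h := by simp only [Matrix.mul_assoc]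
    _ = 1 := by rw [hg'g, Matrix.mul_one, hh'h]

def CongM (A B : Matrix m' m' F) : Prop := ∃ g, GLlike F g ∧ A = g * B * gᵀ

lemma CongM.rfl (A : Matrix m' m' F) : CongM F A A :=
  ⟨1, GLlike_one F, by simp⟩

lemma CongM.symm {A B : Matrix m' m' F} (h : CongM F A B) : CongM F B A := by
  obtain ⟨g, ⟨hg1, h', hh'1, hgh, hhg⟩, rfl⟩ := h
  refine ⟨h', ⟨hh'1, g, hg1, hhg, hgh⟩, ?_⟩
  have ht : gᵀ * h'ᵀ = 1 := by rw [← Matrix.transpose_mul, hhg, Matrix.transpose_one]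
  have key : h' * (g * B * gᵀ) * h'ᵀ = B := by
    calc h' * (g * B * gᵀ) * h'ᵀ = (h' * g) * B * (gᵀ * h'ᵀ) := by
          simp only [Matrix.mul_assoc]
    _ = B := by rw [hhg, ht, Matrix.one_mul, Matrix.mul_one]
  exact key.symm

lemma CongM.trans {A B C : Matrix m' m' F} (h1 : CongM F A B) (h2 : CongM F B C) :
    CongM F A C := by
  obtain ⟨g, hg, rfl⟩ := h1
  obtain ⟨h, hh, rfl⟩ := h2
  exact ⟨g * h, hg.mul F hh, by
    simp only [Matrix.transpose_mul, Matrix.mul_assoc]⟩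

lemma CongM.skew {A B : Matrix m' m' F} (hB : Bᵀ = -B) (h : CongM F A B) : Aᵀ = -A := by
  obtain ⟨g, hg, rfl⟩ := h
  simp only [Matrix.transpose_mul, Matrix.transpose_transpose, hB, Matrix.mul_assoc,
    Matrix.neg_mul, Matrix.mul_neg]

lemma CongM.conj_bound {g A : Matrix m' m' F} {c : ℝ} (hc : 0 ≤ c)
    (hg : ∀ i j, ‖g i j‖ ≤ 1) (hA : ∀ i j, ‖A i j‖ ≤ c) :
    ∀ i j, ‖(g * A * gᵀ) i j‖ ≤ c := by
  have h1 : ∀ i j, ‖(g * A) i j‖ ≤ c := by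
    intro i j
    simpa using entry_mul_le F g A zero_le_one hc hg hA i j
  intro i j
  simpa using entry_mul_le F (g * A) gᵀ hc zero_le_one h1
    (fun i j => hg j i) i j

lemma GLlike.submatrix {l : Type} [Fintype l] [DecidableEq l] {g : Matrix m' m' F}
    (f : l ≃ m') (hg : GLlike F g) : GLlike F (g.submatrix f f) := by
  obtain ⟨hg1, h, hh1, hgh, hhg⟩ := hg
  refine ⟨fun i j => hg1 _ _, h.submatrix f f, fun i j => hh1 _ _, ?_, ?_⟩
  · rw [Matrix.submatrix_mul_equiv, hgh, Matrix.submatrix_one_equiv]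
  · rw [Matrix.submatrix_mul_equiv, hhg, Matrix.submatrix_one_equiv]

lemma CongM.of_submatrix {l : Type} [Fintype l] [DecidableEq l] {A B : Matrix m' m' F}
    (f : l ≃ m') (h : CongM F (A.submatrix f f) (B.submatrix f f)) : CongM F A B := by
  obtain ⟨g, hg, heq⟩ := h
  refine ⟨g.submatrix ⇑f.symm ⇑f.symm, hg.submatrix F f.symm, ?_⟩
  have hB : (B.submatrix ⇑f ⇑f).submatrix ⇑f.symm ⇑f.symm = B := by
    ext i j; simp
  have hA2 : (A.submatrix ⇑f ⇑f).submatrix ⇑f.symm ⇑f.symm = A := by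
    ext i j; simp
  calc A = (A.submatrix ⇑f ⇑f).submatrix ⇑f.symm ⇑f.symm := hA2.symm
  _ = ((g * B.submatrix ⇑f ⇑f) * gᵀ).submatrix ⇑f.symm ⇑f.symm := by rw [heq]
  _ = (g.submatrix ⇑f.symm ⇑f.symm * (B.submatrix ⇑f ⇑f).submatrix ⇑f.symm ⇑f.symm)
        * gᵀ.submatrix ⇑f.symm ⇑f.symm := by
      rw [Matrix.submatrix_mul_equiv, Matrix.submatrix_mul_equiv]
  _ = g.submatrix ⇑f.symm ⇑f.symm * B * (g.submatrix ⇑f.symm ⇑f.symm)ᵀ := by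
      rw [hB, Matrix.transpose_submatrix]

/-- Permutation matrix. -/
def permM (σ : Equiv.Perm m') : Matrix m' m' F :=
  Matrix.of fun i j => if σ j = i then 1 else 0

lemma permM_mul (σ : Equiv.Perm m') (M : Matrix m' m' F) :
    permM F σ * M = M.submatrix ⇑σ.symm _root_.id := by
  ext i j
  simp [Matrix.mul_apply, permM, Equiv.apply_eq_iff_eq_symm_apply, ite_mul, zero_mul,
    one_mul, Finset.sum_ite_eq']

lemma mul_permM_T (σ : Equiv.Perm m') (M : Matrix m' m' F) :
    M * (permM F σ)ᵀ = M.submatrix _root_.id ⇑σ.symm := by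
  ext i j
  simp [Matrix.mul_apply, permM, Matrix.transpose_apply, Equiv.apply_eq_iff_eq_symm_apply,
    mul_ite, mul_zero, mul_one, Finset.sum_ite_eq']

lemma GLlike_permM (σ : Equiv.Perm m') : GLlike F (permM F σ) := by
  refine ⟨fun i j => by simp only [permM, Matrix.of_apply]; split <;> simp,
    permM F σ.symm, fun i j => by simp only [permM, Matrix.of_apply]; split <;> simp, ?_, ?_⟩
  · rw [permM_mul]
    ext i j
    simp [permM, Matrix.one_apply, Equiv.symm_apply_eq, eq_comm]
  · rw [permM_mul]
    ext i j
    simp [permM, Matrix.one_apply, Equiv.symm_apply_eq, eq_comm]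

lemma cong_perm (A : Matrix m' m' F) (σ : Equiv.Perm m') :
    CongM F A (A.submatrix ⇑σ ⇑σ) := by
  refine ⟨permM F σ, GLlike_permM F σ, ?_⟩
  rw [Matrix.mul_assoc, mul_permM_T, permM_mul]
  ext i j
  simp

/-- Every nonzero element is a unit times an integer power of the uniformizer. -/
lemma exists_unit_rep {ϖ : F} (hϖ : IsUniformizer F ϖ) (x : F) (hx : x ≠ 0) :
    ∃ (k : ℤ) (u : F), ‖u‖ = 1 ∧ x = ϖ ^ (-k) * u := by
  obtain ⟨hϖ0, hϖ1, hgen⟩ := hϖ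
  have hρ0 : (0:ℝ) < ‖ϖ‖ := norm_pos_iff.2 hϖ0
  have hxn : (0:ℝ) < ‖x‖ := norm_pos_iff.2 hx
  obtain ⟨nn, hn1, hn2⟩ := exists_mem_Ioc_zpow (x := ‖x‖) (y := ‖ϖ‖⁻¹) hxn
    ((one_lt_inv₀ hρ0).2 hϖ1)
  set u : F := ϖ ^ (nn + 1) * x with hu
  have hnu : ‖u‖ = ‖ϖ‖ ^ (nn+1) * ‖x‖ := by
    rw [hu, norm_mul, norm_zpow]
  have hinv : ∀ (mz : ℤ), ‖ϖ‖⁻¹ ^ mz = ‖ϖ‖ ^ (-mz) := by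
    intro mz; rw [_root_.inv_zpow, ← _root_.zpow_neg]
  have hu1 : ‖u‖ ≤ 1 := by
    rw [hnu]
    calc ‖ϖ‖ ^ (nn+1) * ‖x‖ ≤ ‖ϖ‖ ^ (nn+1) * ‖ϖ‖⁻¹ ^ (nn+1) :=
      mul_le_mul_of_nonneg_left hn2 (le_of_lt (zpow_pos hρ0 _))
    _ = 1 := by
          rw [hinv, ← zpow_add₀ (ne_of_gt hρ0)]
          have he : nn + 1 + -(nn+1) = 0 := by ring
          rw [he, zpow_zero]
  have hu2 : ‖ϖ‖ < ‖u‖ := by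
    rw [hnu]
    calc ‖ϖ‖ = ‖ϖ‖ ^ (nn+1) * ‖ϖ‖⁻¹ ^ nn := by
          rw [hinv, ← zpow_add₀ (ne_of_gt hρ0)]
          have he : nn + 1 + -nn = 1 := by ring
          rw [he, zpow_one]
    _ < ‖ϖ‖ ^ (nn+1) * ‖x‖ := by
          exact mul_lt_mul_of_pos_left hn1 (zpow_pos hρ0 _)
  have huu : ‖u‖ = 1 := by
    rcases lt_or_eq_of_le hu1 with h | h
    · exfalso
      obtain ⟨y, hy1, hy2⟩ := hgen u h
      have : ‖u‖ ≤ ‖ϖ‖ := by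
        rw [hy2, norm_mul]
        calc ‖ϖ‖ * ‖y‖ ≤ ‖ϖ‖ * 1 := mul_le_mul_of_nonneg_left hy1 (le_of_lt hρ0)
        _ = ‖ϖ‖ := mul_one _
      exact absurd this (not_le.2 hu2)
    · exact h
  refine ⟨nn + 1, u, huu, ?_⟩
  rw [hu, ← mul_assoc, ← zpow_add₀ hϖ0]
  have he : -(nn + 1) + (nn + 1) = 0 := by ring
  rw [he, zpow_zero, one_mul]

lemma ppow_coe (ϖ : F) (z : ℤ) : ppow F ϖ (z : WithBot ℤ) = ϖ ^ (-z) := rfl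

lemma ppow_bot (ϖ : F) : ppow F ϖ ⊥ = 0 := rfl

lemma ppow_le {ϖ : F} (hϖ : IsUniformizer F ϖ) {k₁ : ℤ} {s : WithBot ℤ}
    (h : ‖ppow F ϖ s‖ ≤ ‖ppow F ϖ (k₁ : WithBot ℤ)‖) : s ≤ (k₁ : WithBot ℤ) := by
  obtain ⟨hϖ0, hϖ1, -⟩ := hϖ
  have hρ0 : (0:ℝ) < ‖ϖ‖ := norm_pos_iff.2 hϖ0
  induction s using WithBot.recBotCoe with
  | bot => exact bot_le
  | coe z =>
    rw [ppow_coe, ppow_coe, norm_zpow, norm_zpow] at h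
    have := (zpow_le_zpow_iff_right_of_lt_one₀ hρ0 hϖ1).1 h
    exact_mod_cast neg_le_neg_iff.1 this

lemma conj_skew {g B : Matrix m' m' F} (hB : Bᵀ = -B) :
    (g * B * gᵀ)ᵀ = -(g * B * gᵀ) := by
  simp only [Matrix.transpose_mul, Matrix.transpose_transpose, hB, Matrix.mul_assoc,
    Matrix.neg_mul, Matrix.mul_neg]

lemma bdiagJ_zero (n : ℕ) : bdiagJ F n (fun _ => (0:F)) = 0 := by
  ext i j
  simp only [bdiagJ, Matrix.of_apply]
  split_ifs <;> simp

lemma bdiagJ_pair (n : ℕ) (xs : Fin n → F) (m : Fin n) (i j : Fin (2*n))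
    (hi : (i:ℕ) = 2*(m:ℕ)) (hj : (j:ℕ) = 2*(m:ℕ)+1) :
    bdiagJ F n xs i j = xs m := by
  simp only [bdiagJ, Matrix.of_apply]
  rw [if_pos ⟨by omega, by omega⟩]
  exact congrArg xs (Fin.ext (show (i:ℕ)/2 = (m:ℕ) by omega))

lemma bdiagJ_block (n : ℕ) (xs : Fin (n+1) → F)
    (f : (Fin 2 ⊕ Fin (2*n)) → Fin (2*(n+1)))
    (hf1 : ∀ i : Fin 2, (f (Sum.inl i) : ℕ) = (i : ℕ))
    (hf2 : ∀ j : Fin (2*n), (f (Sum.inr j) : ℕ) = 2 + (j : ℕ)) :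
    (bdiagJ F (n+1) xs).submatrix f f
      = Matrix.fromBlocks !![0, xs 0; -(xs 0), 0] 0 0 (bdiagJ F n (fun m => xs m.succ)) := by
  ext i j
  rcases i with i | i <;> rcases j with j | j
  · have hi := hf1 i
    have hj := hf1 j
    simp only [Matrix.submatrix_apply, Matrix.fromBlocks_apply₁₁, bdiagJ, Matrix.of_apply]
    fin_cases i <;> fin_cases j <;>
      simp_all <;>
      first
        | (rw [if_pos (by omega)]
           exact congrArg xs (Fin.ext (by simp; omega)))
        | (rw [if_neg (by omega), if_neg (by omega)])
        | (rw [if_neg (by omega), if_pos (by omega)]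
           exact congrArg Neg.neg (congrArg xs (Fin.ext (by simp; omega))))
  · have hi := hf1 i
    have hj := hf2 j
    have hlt : (i:ℕ) < 2 := i.isLt
    simp only [Matrix.submatrix_apply, Matrix.fromBlocks_apply₁₂, Matrix.zero_apply, bdiagJ,
      Matrix.of_apply]
    split_ifs with h1 h1' <;>
      first
        | rfl
        | exact absurd h1 (by omega)
        | exact absurd h1' (by omega)
  · have hi := hf2 i
    have hj := hf1 j
    have hlt : (j:ℕ) < 2 := j.isLt
    simp only [Matrix.submatrix_apply, Matrix.fromBlocks_apply₂₁, Matrix.zero_apply, bdiagJ,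
      Matrix.of_apply]
    split_ifs with h1 h1' <;>
      first
        | rfl
        | exact absurd h1 (by omega)
        | exact absurd h1' (by omega)
  · have hi := hf2 i
    have hj := hf2 j
    simp only [Matrix.submatrix_apply, Matrix.fromBlocks_apply₂₂, bdiagJ, Matrix.of_apply]
    split_ifs with h1 h2 h3 h4 h5 h6 <;>
      first
        | rfl
        | exact absurd h1 (by omega)
        | exact absurd h2 (by omega)
        | exact absurd h3 (by omega)
        | exact absurd h4 (by omega)
        | exact absurd h5 (by omega)
        | exact absurd h6 (by omega)
        | exact congrArg xs (Fin.ext (by simp [Fin.val_succ]; omega))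
        | (congr 1
           exact congrArg xs (Fin.ext (by simp [Fin.val_succ]; omega)))

lemma GLlike_diagonal {d : m' → F} (h1 : ∀ i, ‖d i‖ ≤ 1) (h2 : ∀ i, ‖(d i)⁻¹‖ ≤ 1)
    (h0 : ∀ i, d i ≠ 0) : GLlike F (Matrix.diagonal d) := by
  refine ⟨fun i j => ?_, Matrix.diagonal (fun i => (d i)⁻¹), fun i j => ?_, ?_, ?_⟩
  · rw [Matrix.diagonal_apply]
    split
    · exact h1 i
    · simp
  · rw [Matrix.diagonal_apply]
    split
    · exact h2 i
    · simp
  · rw [Matrix.diagonal_mul_diagonal]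
    have : (fun i => d i * (d i)⁻¹) = fun _ => (1:F) := by
      funext i; exact mul_inv_cancel₀ (h0 i)
    rw [this, Matrix.diagonal_one]
  · rw [Matrix.diagonal_mul_diagonal]
    have : (fun i => (d i)⁻¹ * d i) = fun _ => (1:F) := by
      funext i; exact inv_mul_cancel₀ (h0 i)
    rw [this, Matrix.diagonal_one]

lemma GLlike_fromBlocks {l : Type} [Fintype l] [DecidableEq l]
    {g1 : Matrix m' m' F} {g4 : Matrix l l F}
    (hg1 : GLlike F g1) (hg4 : GLlike F g4) :
    GLlike F (Matrix.fromBlocks g1 0 0 g4) := by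
  obtain ⟨ha1, h1, hb1, hc1, hd1⟩ := hg1
  obtain ⟨ha4, h4, hb4, hc4, hd4⟩ := hg4
  refine ⟨fun i j => ?_, Matrix.fromBlocks h1 0 0 h4, fun i j => ?_, ?_, ?_⟩
  · rcases i with i | i <;> rcases j with j | j <;>
      simp only [Matrix.fromBlocks_apply₁₁, Matrix.fromBlocks_apply₁₂,
        Matrix.fromBlocks_apply₂₁, Matrix.fromBlocks_apply₂₂, Matrix.zero_apply, norm_zero]
    · exact ha1 i j
    · exact zero_le_one
    · exact zero_le_one
    · exact ha4 i j
  · rcases i with i | i <;> rcases j with j | j <;>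
      simp only [Matrix.fromBlocks_apply₁₁, Matrix.fromBlocks_apply₁₂,
        Matrix.fromBlocks_apply₂₁, Matrix.fromBlocks_apply₂₂, Matrix.zero_apply, norm_zero]
    · exact hb1 i j
    · exact zero_le_one
    · exact zero_le_one
    · exact hb4 i j
  · rw [Matrix.fromBlocks_multiply]
    simp only [Matrix.mul_zero, Matrix.zero_mul, add_zero, zero_add, hc1, hc4]
    exact Matrix.fromBlocks_one
  · rw [Matrix.fromBlocks_multiply]
    simp only [Matrix.mul_zero, Matrix.zero_mul, add_zero, zero_add, hd1, hd4]
    exact Matrix.fromBlocks_one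

end Helpers

/-- Every `A ∈ Skew(2n, F)` can be written as `A = g · diag(ϖ^{-k₁}J, …, ϖ^{-kₙ}J) · gᵗ` with `g ∈ GL(2n, O_F)` and `k₁ ≥ k₂ ≥ … ≥ kₙ`, `kᵢ ∈ ℤ ∪ {-∞}`. -/
theorem skew_normal_form (h2 : (2 : F) ≠ 0) (ϖ : F) (hϖ : IsUniformizer F ϖ) (n : ℕ)
    (A : Matrix (Fin (2 * n)) (Fin (2 * n)) F) (hA : Aᵀ = -A) :
    ∃ (g : Matrix (Fin (2 * n)) (Fin (2 * n)) F) (k : Fin n → WithBot ℤ),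
      Antitone k ∧ g ∈ GLO F (2 * n) ∧
      A = g * bdiagJ F n (fun m => ppow F ϖ (k m)) * gᵀ := by
  revert A
  induction n with
  | zero =>
    intro A hA
    refine ⟨1, fun i => i.elim0, by intro a b h; exact a.elim0, GLlike_one F, ?_⟩
    ext i j
    exact i.elim0
  | succ n ih =>
    intro A hA
    have hskew : ∀ i j, A j i = - A i j := by
      intro i j
      have h := congrFun (congrFun hA i) j
      simpa [Matrix.transpose_apply] using h
    by_cases hA0 : A = 0
    · refine ⟨1, fun _ => (⊥ : WithBot ℤ), fun a b h => le_refl _, GLlike_one F, ?_⟩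
      have hz : bdiagJ F (n+1) (fun m => ppow F ϖ ((fun _ => (⊥ : WithBot ℤ)) m)) = 0 :=
        bdiagJ_zero F (n+1)
      rw [hA0, hz]
      simp
    · -- diagonal vanishes
      have hdiag : ∀ i, A i i = 0 := by
        intro i
        have h := hskew i i
        have hsum : (2:F) * A i i = 0 := by
          rw [two_mul]
          nth_rewrite 1 [h]
          ring
        rcases mul_eq_zero.1 hsum with h' | h'
        · exact absurd h' h2
        · exact h'
      -- maximal entry
      have hne : ∃ p : Fin (2*(n+1)) × Fin (2*(n+1)), A p.1 p.2 ≠ 0 := by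
        by_contra hcon
        push_neg at hcon
        exact hA0 (by ext i j; exact hcon (i, j))
      obtain ⟨⟨i0, j0⟩, -, hmax⟩ :=
        Finset.exists_max_image (Finset.univ : Finset (Fin (2*(n+1)) × Fin (2*(n+1))))
          (fun p => ‖A p.1 p.2‖) ⟨hne.choose, Finset.mem_univ _⟩
      set a := A i0 j0 with ha
      set c := ‖a‖ with hc
      have hbound : ∀ i j, ‖A i j‖ ≤ c := fun i j => hmax (i, j) (Finset.mem_univ _)
      have hcpos : 0 < c := by
        obtain ⟨p, hp⟩ := hne
        calc (0:ℝ) < ‖A p.1 p.2‖ := norm_pos_iff.2 hp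
        _ ≤ c := hbound p.1 p.2
      have ha0 : a ≠ 0 := by
        intro h
        rw [hc, h, norm_zero] at hcpos
        exact lt_irrefl _ hcpos
      have hij0 : i0 ≠ j0 := by
        intro h
        apply ha0
        rw [ha, h, hdiag]
      -- special indices
      set z0 : Fin (2*(n+1)) := ⟨0, by omega⟩ with hz0def
      set z1 : Fin (2*(n+1)) := ⟨1, by omega⟩ with hz1def
      have hz01 : z0 ≠ z1 := by
        intro h
        have := congrArg Fin.val h
        simp [hz0def, hz1def] at this
      -- permutation sending z0 ↦ i0, z1 ↦ j0
      set e1 := Equiv.swap z0 i0 with he1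
      set jj := e1.symm j0 with hjj
      have hjjz0 : jj ≠ z0 := by
        intro h
        apply hij0
        have h1 : e1 jj = e1 z0 := by rw [h]
        rw [hjj, Equiv.apply_symm_apply, he1, Equiv.swap_apply_left] at h1
        exact h1.symm
      set e2 := Equiv.swap z1 jj with he2
      set σ := e2.trans e1 with hσ
      have hσ0 : σ z0 = i0 := by
        have h1 : e2 z0 = z0 := Equiv.swap_apply_of_ne_of_ne hz01 (Ne.symm hjjz0)
        rw [hσ, Equiv.trans_apply, h1, he1, Equiv.swap_apply_left]
      have hσ1 : σ z1 = j0 := by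
        have h1 : e2 z1 = jj := Equiv.swap_apply_left _ _
        rw [hσ, Equiv.trans_apply, h1, hjj, Equiv.apply_symm_apply]
      set B := A.submatrix ⇑σ ⇑σ with hB
      have congAB : CongM F A B := cong_perm F A σ
      have hBskew : ∀ i j, B j i = -B i j := fun i j => hskew _ _
      have hBbound : ∀ i j, ‖B i j‖ ≤ c := fun i j => hbound _ _
      have hB01 : B z0 z1 = a := by
        rw [hB]
        simp only [Matrix.submatrix_apply, hσ0, hσ1]
        exact ha.symm
      -- unit decomposition of the pivot
      obtain ⟨k₁, u, hu, hxu⟩ := exists_unit_rep F hϖ a ha0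
      set t := ϖ ^ (-k₁) with htdef
      have hϖ0 : ϖ ≠ 0 := hϖ.1
      have ht0 : t ≠ 0 := zpow_ne_zero _ hϖ0
      have hu0 : u ≠ 0 := by
        intro h
        rw [h, norm_zero] at hu
        norm_num at hu
      have htc : ‖t‖ = c := by
        rw [hc, hxu, norm_mul, hu, mul_one]
      -- scaling
      set d : Fin (2*(n+1)) → F := fun i => if i = z0 then u⁻¹ else 1 with hd
      have hdi : ∀ i, d i = if i = z0 then u⁻¹ else 1 := fun i => by rw [hd]
      have hd0 : ∀ i, d i ≠ 0 := by
        intro i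
        rw [hdi]
        split
        · exact inv_ne_zero hu0
        · exact one_ne_zero
      have hdn : ∀ i, ‖d i‖ ≤ 1 := by
        intro i
        rw [hdi]
        split
        · rw [norm_inv, hu]; norm_num
        · simp
      have hdn' : ∀ i, ‖(d i)⁻¹‖ ≤ 1 := by
        intro i
        rw [hdi]
        split
        · rw [inv_inv, hu]
        · simp
      set B₂ := Matrix.of (fun i j => d i * B i j * d j) with hB₂def
      have hB₂eq : B₂ = Matrix.diagonal d * B * (Matrix.diagonal d)ᵀ := by
        rw [Matrix.diagonal_transpose]
        ext i j
        rw [Matrix.mul_diagonal, Matrix.diagonal_mul]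
        simp only [hB₂def, Matrix.of_apply]
      have congBB₂ : CongM F B B₂ :=
        CongM.symm F ⟨Matrix.diagonal d, GLlike_diagonal F hdn hdn' hd0, hB₂eq⟩
      have hB₂bound : ∀ i j, ‖B₂ i j‖ ≤ c := by
        intro i j
        simp only [hB₂def, Matrix.of_apply]
        calc ‖d i * B i j * d j‖ = ‖d i‖ * ‖B i j‖ * ‖d j‖ := by rw [norm_mul, norm_mul]
        _ ≤ 1 * c * 1 := by
            have h1 := hdn i
            have h2 := hBbound i j
            have h3 := hdn j
            have hn1 : (0:ℝ) ≤ ‖d i‖ := norm_nonneg _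
            have hn2 : (0:ℝ) ≤ ‖B i j‖ := norm_nonneg _
            have hn3 : (0:ℝ) ≤ ‖d j‖ := norm_nonneg _
            exact mul_le_mul (mul_le_mul h1 h2 hn2 zero_le_one) h3 hn3
              (mul_nonneg zero_le_one (le_of_lt hcpos))
        _ = c := by ring
      have hdz0 : d z0 = u⁻¹ := by rw [hdi]; exact if_pos rfl
      have hdz1 : d z1 = 1 := by rw [hdi]; exact if_neg (Ne.symm hz01)
      have hB₂01 : B₂ z0 z1 = t := by
        simp only [hB₂def, Matrix.of_apply, hdz0, hdz1, hB01, hxu]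
        field_simp
      have hB₂10 : B₂ z1 z0 = -t := by
        simp only [hB₂def, Matrix.of_apply, hdz0, hdz1]
        rw [hBskew z0 z1, hB01, hxu]
        field_simp
      have hB₂00 : B₂ z0 z0 = 0 := by
        simp only [hB₂def, Matrix.of_apply]
        have h1 : B z0 z0 = 0 := hdiag _
        rw [h1]
        ring
      have hB₂11 : B₂ z1 z1 = 0 := by
        simp only [hB₂def, Matrix.of_apply]
        have h1 : B z1 z1 = 0 := hdiag _
        rw [h1]
        ring
      have hB₂skew' : ∀ i j, B₂ j i = -B₂ i j := by
        intro i j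
        simp only [hB₂def, Matrix.of_apply]
        rw [hBskew i j]
        ring
      -- reindexing
      have hmn : 2*(n+1) = 2 + 2*n := by omega
      set e : Fin (2*(n+1)) ≃ (Fin 2 ⊕ Fin (2*n)) :=
        (finCongr hmn).trans finSumFinEquiv.symm with he
      have hval1 : ∀ i : Fin 2, ((e.symm (Sum.inl i)) : ℕ) = (i : ℕ) := by
        intro i
        simp [he, Equiv.symm_trans_apply]
      have hval2 : ∀ j : Fin (2*n), ((e.symm (Sum.inr j)) : ℕ) = 2 + (j : ℕ) := by
        intro j
        simp [he, Equiv.symm_trans_apply]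
        omega
      have hez0 : e.symm (Sum.inl (0 : Fin 2)) = z0 := by
        apply Fin.ext
        rw [hval1]
        rfl
      have hez1 : e.symm (Sum.inl (1 : Fin 2)) = z1 := by
        apply Fin.ext
        rw [hval1]
        rfl
      set Bs := B₂.submatrix ⇑e.symm ⇑e.symm with hBsdef
      have hBsSkew : Bsᵀ = -Bs := by
        ext i j
        simp only [hBsdef, Matrix.transpose_apply, Matrix.submatrix_apply, Matrix.neg_apply]
        exact hB₂skew' _ _
      set P := Bs.toBlocks₁₁ with hPdef
      set Q := Bs.toBlocks₁₂ with hQdef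
      set R := Bs.toBlocks₂₁ with hRdef
      set S := Bs.toBlocks₂₂ with hSdef
      have hBsblocks : Bs = Matrix.fromBlocks P Q R S := (Matrix.fromBlocks_toBlocks Bs).symm
      set sJ : Matrix (Fin 2) (Fin 2) F := !![0, t; -t, 0] with hsJ
      have hBs00 : Bs (Sum.inl 0) (Sum.inl 0) = 0 := by
        rw [hBsdef]; simp only [Matrix.submatrix_apply, hez0]; exact hB₂00
      have hBs01 : Bs (Sum.inl 0) (Sum.inl 1) = t := by
        rw [hBsdef]; simp only [Matrix.submatrix_apply, hez0, hez1]; exact hB₂01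
      have hBs10 : Bs (Sum.inl 1) (Sum.inl 0) = -t := by
        rw [hBsdef]; simp only [Matrix.submatrix_apply, hez0, hez1]; exact hB₂10
      have hBs11 : Bs (Sum.inl 1) (Sum.inl 1) = 0 := by
        rw [hBsdef]; simp only [Matrix.submatrix_apply, hez1]; exact hB₂11
      have hP : P = sJ := by
        ext i j
        fin_cases i <;> fin_cases j
        · exact hBs00
        · exact hBs01
        · exact hBs10
        · exact hBs11
      set Pinv : Matrix (Fin 2) (Fin 2) F := !![0, -t⁻¹; t⁻¹, 0] with hPinvdef
      have hPPinv : sJ * Pinv = 1 := by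
        rw [hsJ, hPinvdef]
        ext i j
        fin_cases i <;> fin_cases j <;>
          simp [Matrix.mul_apply, Fin.sum_univ_two, Matrix.one_apply,
            mul_inv_cancel₀ ht0, inv_mul_cancel₀ ht0]
      have hPinvP : Pinv * sJ = 1 := by
        rw [hsJ, hPinvdef]
        ext i j
        fin_cases i <;> fin_cases j <;>
          simp [Matrix.mul_apply, Fin.sum_univ_two, Matrix.one_apply,
            mul_inv_cancel₀ ht0, inv_mul_cancel₀ ht0]
      have hPinvT : Pinvᵀ = -Pinv := by
        rw [hPinvdef]
        ext i j
        fin_cases i <;> fin_cases j <;> simp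
      set X := -(R * Pinv) with hXdef
      have hRbound : ∀ i j, ‖R i j‖ ≤ c := fun i j => hB₂bound _ _
      have hQbound : ∀ i j, ‖Q i j‖ ≤ c := fun i j => hB₂bound _ _
      have hSbound : ∀ i j, ‖S i j‖ ≤ c := fun i j => hB₂bound _ _
      have hXbound : ∀ i j, ‖X i j‖ ≤ 1 := by
        intro i j
        rw [hXdef, Matrix.neg_apply, norm_neg, Matrix.mul_apply, Fin.sum_univ_two]
        fin_cases j
        · simp [hPinvdef]
          rw [htc, ← div_eq_mul_inv]
          exact (div_le_one hcpos).2 (hRbound i 1)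
        · simp [hPinvdef, mul_neg]
          rw [htc, ← div_eq_mul_inv]
          exact (div_le_one hcpos).2 (hRbound i 0)
      have hRQ : Rᵀ = -Q := by
        ext i j
        exact hB₂skew' (e.symm (Sum.inl i)) (e.symm (Sum.inr j))
      have hXsJ : X * sJ + R = 0 := by
        rw [hXdef, Matrix.neg_mul, Matrix.mul_assoc, hPinvP, Matrix.mul_one]
        exact neg_add_cancel R
      have hXT : sJ * Xᵀ + Q = 0 := by
        have hXt : Xᵀ = -(Pinv * Q) := by
          rw [hXdef, Matrix.transpose_neg, Matrix.transpose_mul, hPinvT, hRQ]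
          rw [Matrix.neg_mul, Matrix.mul_neg, neg_neg]
        rw [hXt, Matrix.mul_neg, ← Matrix.mul_assoc, hPPinv, Matrix.one_mul]
        exact neg_add_cancel Q
      set S' := X * Q + S with hS'def
      set E := Matrix.fromBlocks (1 : Matrix (Fin 2) (Fin 2) F) 0 X
        (1 : Matrix (Fin (2*n)) (Fin (2*n)) F) with hEdef
      have hET : Eᵀ = Matrix.fromBlocks (1 : Matrix (Fin 2) (Fin 2) F) Xᵀ 0
          (1 : Matrix (Fin (2*n)) (Fin (2*n)) F) := by
        rw [hEdef, Matrix.fromBlocks_transpose, Matrix.transpose_one, Matrix.transpose_one,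
          Matrix.transpose_zero]
      have hconjE : E * Bs * Eᵀ = Matrix.fromBlocks sJ 0 0 S' := by
        rw [hBsblocks, hP, hET, hEdef, Matrix.fromBlocks_multiply, Matrix.fromBlocks_multiply]
        simp only [Matrix.one_mul, Matrix.mul_one, Matrix.zero_mul, Matrix.mul_zero,
          add_zero, zero_add]
        rw [hXsJ, hXT]
        simp only [Matrix.zero_mul, zero_add]
        rfl
      have hEGL : GLlike F E := by
        rw [hEdef]
        refine ⟨fun i j => ?_, Matrix.fromBlocks 1 0 (-X) 1, fun i j => ?_, ?_, ?_⟩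
        · rcases i with i|i <;> rcases j with j|j <;>
            simp only [Matrix.fromBlocks_apply₁₁, Matrix.fromBlocks_apply₁₂,
              Matrix.fromBlocks_apply₂₁, Matrix.fromBlocks_apply₂₂, Matrix.zero_apply, norm_zero]
          · rw [Matrix.one_apply]; split <;> simp
          · exact zero_le_one
          · exact hXbound i j
          · rw [Matrix.one_apply]; split <;> simp
        · rcases i with i|i <;> rcases j with j|j <;>
            simp only [Matrix.fromBlocks_apply₁₁, Matrix.fromBlocks_apply₁₂,
              Matrix.fromBlocks_apply₂₁, Matrix.fromBlocks_apply₂₂, Matrix.zero_apply, norm_zero]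
          · rw [Matrix.one_apply]; split <;> simp
          · exact zero_le_one
          · rw [Matrix.neg_apply, norm_neg]; exact hXbound i j
          · rw [Matrix.one_apply]; split <;> simp
        · rw [Matrix.fromBlocks_multiply]
          simp only [Matrix.one_mul, Matrix.mul_one, Matrix.zero_mul, Matrix.mul_zero,
            add_zero, zero_add, add_neg_cancel]
          exact Matrix.fromBlocks_one
        · rw [Matrix.fromBlocks_multiply]
          simp only [Matrix.one_mul, Matrix.mul_one, Matrix.zero_mul, Matrix.mul_zero,
            add_zero, zero_add, neg_add_cancel]
          exact Matrix.fromBlocks_one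
      have congBsC : CongM F Bs (Matrix.fromBlocks sJ 0 0 S') :=
        CongM.symm F ⟨E, hEGL, hconjE.symm⟩
      have hCskew : (Matrix.fromBlocks sJ 0 0 S')ᵀ = -(Matrix.fromBlocks sJ 0 0 S') := by
        rw [← hconjE]
        exact conj_skew F hBsSkew
      have hS'skew : S'ᵀ = -S' := by
        ext i j
        have h := congrFun (congrFun hCskew (Sum.inr i)) (Sum.inr j)
        simpa only [Matrix.transpose_apply, Matrix.fromBlocks_apply₂₂, Matrix.neg_apply] using h
      have hS'bound : ∀ i j, ‖S' i j‖ ≤ c := by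
        intro i j
        rw [hS'def, Matrix.add_apply]
        refine le_trans (IsUltrametricDist.norm_add_le_max _ _) (max_le ?_ (hSbound i j))
        have h := entry_mul_le F X Q zero_le_one (le_of_lt hcpos) hXbound hQbound i j
        rw [one_mul] at h
        exact h
      obtain ⟨g', k', hk'anti, hg', hS'eq⟩ := ih S' hS'skew
      have hg'GL : GLlike F g' := hg'
      have congS'D' : CongM F S' (bdiagJ F n (fun m => ppow F ϖ (k' m))) := ⟨g', hg'GL, hS'eq⟩
      have hD'bound : ∀ i j, ‖bdiagJ F n (fun m => ppow F ϖ (k' m)) i j‖ ≤ c := by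
        obtain ⟨h', hh'GL, hD'eq⟩ := CongM.symm F congS'D'
        intro i j
        rw [hD'eq]
        exact CongM.conj_bound F (le_of_lt hcpos) hh'GL.1 hS'bound i j
      have hk'le : ∀ m : Fin n, k' m ≤ ((k₁ : ℤ) : WithBot ℤ) := by
        intro m
        apply ppow_le F hϖ
        have hlt1 : 2*(m:ℕ) < 2*n := by omega
        have hlt2 : 2*(m:ℕ)+1 < 2*n := by omega
        have h := hD'bound ⟨2*(m:ℕ), hlt1⟩ ⟨2*(m:ℕ)+1, hlt2⟩
        rw [bdiagJ_pair F n _ m _ _ rfl rfl] at h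
        rw [ppow_coe, ← htdef, htc]
        exact h
      set kk : Fin (n+1) → WithBot ℤ := Fin.cases ((k₁ : ℤ) : WithBot ℤ) k' with hkkdef
      have hkk0 : kk 0 = ((k₁ : ℤ) : WithBot ℤ) := by
        simp [hkkdef]
      have hkks : ∀ m : Fin n, kk m.succ = k' m := by
        intro m
        simp [hkkdef]
      have hkkanti : Antitone kk := by
        intro i j hij
        rcases Fin.eq_zero_or_eq_succ i with rfl | ⟨i', rfl⟩
        · rcases Fin.eq_zero_or_eq_succ j with rfl | ⟨j', rfl⟩
          · exact le_refl _
          · rw [hkk0, hkks]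
            exact hk'le j'
        · rcases Fin.eq_zero_or_eq_succ j with rfl | ⟨j', rfl⟩
          · exact absurd (Fin.le_zero_iff.1 hij) (Fin.succ_ne_zero i')
          · rw [hkks, hkks]
            exact hk'anti (Fin.succ_le_succ_iff.1 hij)
      set xs : Fin (n+1) → F := fun i => ppow F ϖ (kk i) with hxsdef
      have hxs0 : xs 0 = t := by
        have h : xs 0 = ppow F ϖ (kk 0) := by rw [hxsdef]
        rw [h, hkk0, ppow_coe, ← htdef]
      have hxss : (fun m : Fin n => xs m.succ) = (fun m => ppow F ϖ (k' m)) := by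
        funext m
        have h : xs m.succ = ppow F ϖ (kk m.succ) := by rw [hxsdef]
        rw [h, hkks]
      have hblock := bdiagJ_block F n xs (⇑e.symm) hval1 hval2
      rw [hxs0, hxss, ← hsJ] at hblock
      have congCD : CongM F (Matrix.fromBlocks sJ 0 0 S')
          (Matrix.fromBlocks sJ 0 0 (bdiagJ F n (fun m => ppow F ϖ (k' m)))) := by
        refine ⟨Matrix.fromBlocks 1 0 0 g', GLlike_fromBlocks F (GLlike_one F) hg'GL, ?_⟩
        rw [Matrix.fromBlocks_transpose, Matrix.transpose_one, Matrix.transpose_zero,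
          Matrix.transpose_zero, Matrix.fromBlocks_multiply, Matrix.fromBlocks_multiply]
        simp only [Matrix.one_mul, Matrix.mul_one, Matrix.zero_mul, Matrix.mul_zero,
          add_zero, zero_add]
        rw [← hS'eq]
      have congBsD : CongM F Bs ((bdiagJ F (n+1) xs).submatrix ⇑e.symm ⇑e.symm) := by
        rw [hblock]
        exact CongM.trans F congBsC congCD
      have congB₂ : CongM F B₂ (bdiagJ F (n+1) xs) := by
        apply CongM.of_submatrix F e.symm
        rw [← hBsdef]
        exact congBsD
      have congFinal : CongM F A (bdiagJ F (n+1) xs) :=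
        CongM.trans F congAB (CongM.trans F congBB₂ congB₂)
      obtain ⟨g, hgGL, hgeq⟩ := congFinal
      refine ⟨g, kk, hkkanti, hgGL, ?_⟩
      rw [hgeq, hxsdef]


end SkewPaper
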